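/- For every k ≥ 2, the set of all distributions over worlds that are simultaneously possible for φ and representable as a mixture of k independent distributions is a path-connected subset of ℝ^{({0,1}^n)}. -/

import Mathlib

/-- A world is an assignment of Boolean values to `n` variables. -/
abbrev World (n : ℕ) := Fin n → Bool

/-- The independent distribution with parameters `μ`:
`p_μ(w) = ∏ i, μ i ^ (w i) * (1 - μ i) ^ (1 - w i)`. -/
def pInd {n : ℕ} (μ : Fin n → ℝ) (w : World n) : ℝ :=
  ∏ i, if w i then μ i else 1 - μ i

/-- A partial assignment with domain `D` and values `a` covers the world `w`. -/
def covers {n : ℕ} (D : Set (Fin n)) (a : Fin n → Bool) (w : World n) : Prop :=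
  ∀ i ∈ D, w i = a i

/-- The cover of a partial assignment: all worlds agreeing with it on its domain. -/
def coverSet {n : ℕ} (D : Set (Fin n)) (a : Fin n → Bool) : Set (World n) :=
  {w | covers D a w}

/-- A partial assignment is an implicant of `φ` if every world in its cover is possible. -/
def Implicant {n : ℕ} (φ : World n → Bool) (D : Set (Fin n)) (a : Fin n → Bool) : Prop :=
  ∀ w : World n, covers D a w → φ w = true

/-- A prime implicant: an implicant whose cover is not strictly contained in the cover
of another implicant. -/
def PrimeImplicant {n : ℕ} (φ : World n → Bool) (D : Set (Fin n)) (a : Fin n → Bool) : Prop :=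
  Implicant φ D a ∧ ∀ (E : Set (Fin n)) (b : Fin n → Bool),
    Implicant φ E b → ¬ (coverSet D a ⊂ coverSet E b)

/-- The deterministic coordinates of the parameter vector `μ`. -/
def detDom {n : ℕ} (μ : Fin n → ℝ) : Set (Fin n) := {i | μ i = 0 ∨ μ i = 1}

/-- The value assigned by `μ` at a deterministic coordinate. -/
noncomputable def detVal {n : ℕ} (μ : Fin n → ℝ) (i : Fin n) : Bool :=
  if μ i = 1 then true else false

/-- A distribution over worlds: nonnegative, summing to one. -/
def IsDistribution {n : ℕ} (p : World n → ℝ) : Prop :=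
  (∀ w, 0 ≤ p w) ∧ ∑ w, p w = 1

/-- A distribution is possible for `φ` if it vanishes on all impossible worlds. -/
def PossibleDist {n : ℕ} (φ : World n → Bool) (p : World n → ℝ) : Prop :=
  ∀ w, φ w = false → p w = 0

/-- The unit hypercube of parameters. -/
def unitCube (n : ℕ) : Set (Fin n → ℝ) := {μ | ∀ i, μ i ∈ Set.Icc (0:ℝ) 1}

/-- The implicant cube of a partial assignment: coordinates in `D` are fixed,
the others range over `[0,1]`. -/
def implicantCube {n : ℕ} (D : Set (Fin n)) (a : Fin n → Bool) : Set (Fin n → ℝ) :=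
  {μ | (∀ i, μ i ∈ Set.Icc (0:ℝ) 1) ∧ ∀ i ∈ D, μ i = if a i then 1 else 0}

/-- The cubical set of `φ`: the union of the prime implicant cubes. -/
def cubicalSet {n : ℕ} (φ : World n → Bool) : Set (Fin n → ℝ) :=
  ⋃ (D : Set (Fin n)) (a : Fin n → Bool) (_ : PrimeImplicant φ D a), implicantCube D a

/-- The weighted model count `Σ_{w : φ(w)=1} p_μ(w)`. -/
noncomputable def WMC {n : ℕ} (φ : World n → Bool) (μ : Fin n → ℝ) : ℝ :=
  ∑ w : World n, if φ w then pInd μ w else 0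

/-- A world regarded as a point of `[0,1]^n ⊆ ℝ^n`. -/
def worldPoint {n : ℕ} (w : World n) : Fin n → ℝ := fun i => if w i then 1 else 0

/-- An elementary interval is `{0}`, `{1}` or `[0,1]`. -/
def ElemInterval (I : Set ℝ) : Prop := I = {0} ∨ I = {1} ∨ I = Set.Icc 0 1

/-- An elementary cube is a product of elementary intervals. -/
def IsElemCube {n : ℕ} (C : Set (Fin n → ℝ)) : Prop :=
  ∃ I : Fin n → Set ℝ, (∀ i, ElemInterval (I i)) ∧ C = {x | ∀ i, x i ∈ I i}

lemma pInd_nonneg {n : ℕ} {μ : Fin n → ℝ} (hμ : μ ∈ unitCube n) (w : World n) :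
    0 ≤ pInd μ w := by
  apply Finset.prod_nonneg
  intro i _
  by_cases h : w i <;> simp [h, (hμ i).1, sub_nonneg.2 (hμ i).2]

lemma worldPoint_mem {n : ℕ} (w : World n) : worldPoint w ∈ unitCube n := by
  intro i; by_cases h : w i <;> simp [worldPoint, h]

lemma pInd_worldPoint_ne {n : ℕ} {w₀ w : World n} (h : w ≠ w₀) :
    pInd (worldPoint w₀) w = 0 := by
  obtain ⟨i, hi⟩ : ∃ i, w i ≠ w₀ i := by
    by_contra hc; push_neg at hc; exact h (funext hc)
  apply Finset.prod_eq_zero (Finset.mem_univ i)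
  cases hw : w i <;> cases h0 : w₀ i <;> simp_all [worldPoint]

lemma joinedIn_segment {X : Type*} [AddCommGroup X] [Module ℝ X] [TopologicalSpace X]
    [IsTopologicalAddGroup X] [ContinuousSMul ℝ X] {S : Set X} {p q : X}
    (h : ∀ t : ℝ, t ∈ Set.Icc (0:ℝ) 1 → (1 - t) • p + t • q ∈ S) :
    JoinedIn S p q := by
  refine ⟨⟨⟨fun t => (1 - (t:ℝ)) • p + (t:ℝ) • q, by continuity⟩, by simp, by simp⟩,
    fun t => h t t.2⟩


/-- for `k ≥ 2`, the set of distributions that are possible for `φ` and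
representable as mixtures of `k` independent distributions is path-connected. -/
theorem stmt15 (n : ℕ) (hn : 1 ≤ n) (φ : World n → Bool) (hφ : ∃ w, φ w = true)
    (k : ℕ) (hk : 2 ≤ k) :
    IsPathConnected {p : World n → ℝ | PossibleDist φ p ∧
      ∃ (α : Fin k → ℝ) (μ : Fin k → Fin n → ℝ),
        (∀ m, 0 ≤ α m) ∧ (∑ m, α m = 1) ∧ (∀ m, μ m ∈ unitCube n) ∧
        ∀ w : World n, p w = ∑ m, α m * pInd (μ m) w} := by
  classical
  obtain ⟨w₀, hw₀⟩ := hφ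
  set x₀ : World n → ℝ := pInd (worldPoint w₀) with hx₀def
  let i0 : Fin k := ⟨0, by omega⟩
  let i1 : Fin k := ⟨1, by omega⟩
  have hne : i1 ≠ i0 := by simp [i0, i1, Fin.ext_iff]
  have hx₀poss : PossibleDist φ x₀ := by
    intro w hw
    apply pInd_worldPoint_ne
    intro e; rw [e, hw₀] at hw; exact absurd hw (by simp)
  have hx₀mem : x₀ ∈ {p : World n → ℝ | PossibleDist φ p ∧
      ∃ (α : Fin k → ℝ) (μ : Fin k → Fin n → ℝ),
        (∀ m, 0 ≤ α m) ∧ (∑ m, α m = 1) ∧ (∀ m, μ m ∈ unitCube n) ∧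
        ∀ w : World n, p w = ∑ m, α m * pInd (μ m) w} := by
    refine ⟨hx₀poss, fun m => if m = i0 then 1 else 0, fun _ => worldPoint w₀,
      fun m => by dsimp only; split <;> norm_num, by simp, fun m => worldPoint_mem w₀, fun w => ?_⟩
    simp [ite_mul]
    rfl
  refine ⟨x₀, hx₀mem, ?_⟩
  rintro p ⟨hposs, α, μ, hα, hsum, hcube, hrep⟩
  obtain ⟨m₀, hm₀⟩ : ∃ m, α m ≠ 0 := by
    by_contra h; push_neg at h; simp [h] at hsum
  have hkey : ∀ w, φ w = false → pInd (μ m₀) w = 0 := by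
    intro w hw
    have h0 : ∑ m, α m * pInd (μ m) w = 0 := (hrep w).symm.trans (hposs w hw)
    have := (Finset.sum_eq_zero_iff_of_nonneg
      (fun m _ => mul_nonneg (hα m) (pInd_nonneg (hcube m) w))).1 h0 m₀ (Finset.mem_univ _)
    exact (mul_eq_zero.1 this).resolve_left hm₀
  have seg1 : JoinedIn {p : World n → ℝ | PossibleDist φ p ∧
      ∃ (α : Fin k → ℝ) (μ : Fin k → Fin n → ℝ),
        (∀ m, 0 ≤ α m) ∧ (∑ m, α m = 1) ∧ (∀ m, μ m ∈ unitCube n) ∧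
        ∀ w : World n, p w = ∑ m, α m * pInd (μ m) w} p (pInd (μ m₀)) := by
    apply joinedIn_segment
    intro t ht
    refine ⟨?_, fun m => (1 - t) * α m + (if m = m₀ then t else 0), μ, ?_, ?_, hcube, ?_⟩
    · intro w hw
      simp [hposs w hw, hkey w hw]
    · intro m
      refine add_nonneg (mul_nonneg (by linarith [ht.2]) (hα m)) ?_
      split
      · exact ht.1
      · exact le_rfl
    · rw [Finset.sum_add_distrib, ← Finset.mul_sum, hsum]
      simp
    · intro w
      simp only [Pi.add_apply, Pi.smul_apply, smul_eq_mul, add_mul, ite_mul, zero_mul,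
        Finset.sum_add_distrib, Finset.sum_ite_eq', Finset.mem_univ, if_true]
      rw [hrep w, Finset.mul_sum]
      congr 1
      exact Finset.sum_congr rfl fun m _ => by ring
  have seg2 : JoinedIn {p : World n → ℝ | PossibleDist φ p ∧
      ∃ (α : Fin k → ℝ) (μ : Fin k → Fin n → ℝ),
        (∀ m, 0 ≤ α m) ∧ (∑ m, α m = 1) ∧ (∀ m, μ m ∈ unitCube n) ∧
        ∀ w : World n, p w = ∑ m, α m * pInd (μ m) w} (pInd (μ m₀)) x₀ := by
    apply joinedIn_segment
    intro t ht
    refine ⟨?_,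
      fun m => (1 - t) * (if m = i0 then 1 else 0) + t * (if m = i1 then 1 else 0),
      fun m => if m = i0 then μ m₀ else worldPoint w₀, ?_, ?_, ?_, ?_⟩
    · intro w hw
      have hwne : w ≠ w₀ := by intro e; rw [e, hw₀] at hw; exact absurd hw (by simp)
      simp [hkey w hw, pInd_worldPoint_ne hwne, hx₀def]
    · intro m
      refine add_nonneg (mul_nonneg (by linarith [ht.2]) ?_) (mul_nonneg ht.1 ?_)
        <;> (split <;> norm_num)
    · rw [Finset.sum_add_distrib, ← Finset.mul_sum, ← Finset.mul_sum]
      simp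
    · intro m
      dsimp only
      split
      · exact hcube m₀
      · exact worldPoint_mem w₀
    · intro w
      simp only [Pi.add_apply, Pi.smul_apply, smul_eq_mul, add_mul, mul_assoc, ite_mul,
        one_mul, zero_mul, mul_ite, mul_one, mul_zero, Finset.sum_add_distrib,
        Finset.sum_ite_eq', Finset.mem_univ, if_true, if_pos rfl, if_neg hne, hx₀def]
  exact (seg1.trans seg2).symm
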